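/- Assume δ < β and βμ ≤ δ(μ + v_nat). Then along any solution in D of I' = βIS − δI, S' = −βIS − v(t)S − μS + μ with v(t) ≥ v_nat, one has S'(t) < 0 whenever S(t) ≥ δ/β. Consequently every trajectory eventually enters and remains in the region {S < δ/β}, where I'(t) < 0, and therefore I(t) → 0. -/

import Mathlib

open Filter Topology Set


lemma SIR_lin_decay (f f' : ℝ → ℝ) (a c : ℝ)
    (hder : ∀ t ≥ a, HasDerivAt f (f' t) t)
    (hle : ∀ t ≥ a, f' t ≤ -c) :
    ∀ t ≥ a, f t ≤ f a - c * (t - a) := by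
  intro t ht
  have key : AntitoneOn (fun x => f x + c * x) (Set.Ici a) := by
    apply antitoneOn_of_deriv_nonpos (convex_Ici a)
    · intro x hx
      have h2 : HasDerivAt (fun y : ℝ => c * y) c x := by
        simpa using (hasDerivAt_id x).const_mul c
      exact ((hder x hx).add h2).continuousAt.continuousWithinAt
    · intro x hx
      rw [interior_Ici] at hx
      have h2 : HasDerivAt (fun y : ℝ => c * y) c x := by
        simpa using (hasDerivAt_id x).const_mul c
      exact ((hder x hx.le).add h2).differentiableAt.differentiableWithinAt
    · intro x hx
      rw [interior_Ici] at hx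
      have h2 : HasDerivAt (fun y : ℝ => c * y) c x := by
        simpa using (hasDerivAt_id x).const_mul c
      have hd : HasDerivAt (fun x => f x + c * x) (f' x + c) x := (hder x hx.le).add h2
      rw [hd.deriv]
      have := hle x hx.le
      linarith
  have h := key Set.self_mem_Ici ht ht
  simp only at h
  linarith

lemma SIR_barrier (f f' : ℝ → ℝ) (a b : ℝ)
    (hder : ∀ t ≥ a, HasDerivAt f (f' t) t)
    (hneg : ∀ t ≥ a, b ≤ f t → f' t < 0)
    (ha : f a < b) :
    ∀ t ≥ a, f t < b := by
  intro t2 ht2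
  by_contra hge
  push_neg at hge
  have hcont : ContinuousOn f (Set.Icc a t2) := fun x hx =>
    (hder x hx.1).continuousAt.continuousWithinAt
  set E := Set.Icc a t2 ∩ f ⁻¹' Set.Ici b with hE
  have hEne : E.Nonempty := ⟨t2, ⟨ht2, le_refl t2⟩, hge⟩
  have hEclosed : IsClosed E :=
    hcont.preimage_isClosed_of_isClosed isClosed_Icc isClosed_Ici
  have hEbdd : BddBelow E := ⟨a, fun x hx => hx.1.1⟩
  set u := sInf E with hu
  have huE : u ∈ E := hEclosed.csInf_mem hEne hEbdd
  have hau : a ≤ u := huE.1.1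
  have hub : b ≤ f u := huE.2
  have hane : a < u := by
    rcases lt_or_eq_of_le hau with h | h
    · exact h
    · exact absurd hub (by rw [← h]; exact not_le.mpr ha)
  have hlt : ∀ s, a ≤ s → s < u → f s < b := by
    intro s hs hsu
    by_contra h
    push_neg at h
    have hsE : s ∈ E := ⟨⟨hs, hsu.le.trans huE.1.2⟩, h⟩
    exact absurd (csInf_le hEbdd hsE) (not_le.mpr hsu)
  have hfu : f' u < 0 := hneg u hau hub
  have hd := (hder u hau).hasDerivWithinAt (s := Set.Iio u)
  have hslope : Tendsto (slope f u) (𝓝[Set.Iio u \ {u}] u) (𝓝 (f' u)) :=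
    hasDerivWithinAt_iff_tendsto_slope.mp hd
  have hdiff : Set.Iio u \ {u} = Set.Iio u := by
    ext x; simp only [Set.mem_diff, Set.mem_Iio, Set.mem_singleton_iff]
    constructor
    · exact fun h => h.1
    · exact fun h => ⟨h, ne_of_lt h⟩
  rw [hdiff] at hslope
  have hnonneg : (0:ℝ) ≤ f' u := by
    refine ge_of_tendsto hslope ?_
    have hmem : Set.Ioo a u ∈ 𝓝[<] u := Ioo_mem_nhdsLT_of_mem ⟨hane, le_refl u⟩
    filter_upwards [hmem] with s hs
    have h1 : f s < b := hlt s hs.1.le hs.2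
    rw [slope_def_field]
    rw [div_nonneg_iff]
    right
    constructor <;> [linarith; linarith [hs.2]]
  linarith

lemma SIR_escape (f f' : ℝ → ℝ) (a c : ℝ) (hc : 0 < c)
    (hder : ∀ t ≥ a, HasDerivAt f (f' t) t)
    (hpos : ∀ t ≥ a, 0 < f t)
    (hle : ∀ t ≥ a, f' t ≤ -c) : False := by
  have hfa := hpos a le_rfl
  have htge : a ≤ a + f a / c + 1 := by
    have := div_pos hfa hc; linarith
  have h1 := SIR_lin_decay f f' a c hder hle _ htge
  have h2 := hpos _ htge
  have hcc : c * (f a / c) = f a := mul_div_cancel₀ _ hc.ne'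
  have h3 : c * (a + f a / c + 1 - a) = f a + c := by
    rw [show a + f a / c + 1 - a = f a / c + 1 by ring, mul_add, hcc, mul_one]
  linarith

/-- If δ < β and βμ ≤ δ(μ + v_nat) (i.e. R₀ ≤ 1), then along any solution in D,
    S' < 0 whenever S ≥ δ/β; consequently the trajectory eventually enters and
    remains in {S < δ/β}, where I' < 0, and I(t) → 0. -/
theorem SIR_infection_free_global_stability
    (β μ δ vnat : ℝ) (hβ : 0 < β) (hμ : 0 < μ) (hδ : 0 < δ) (hδμ : μ < δ)
    (hvnat : 0 ≤ vnat)
    (hδβ : δ < β) (hR0 : β * μ ≤ δ * (μ + vnat))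
    (v : ℝ → ℝ) (hv : Continuous v) (hvge : ∀ t, vnat ≤ v t)
    (I S : ℝ → ℝ)
    (hD : ∀ t ≥ (0:ℝ), 0 < I t ∧ 0 < S t ∧ I t + S t ≤ 1)
    (hI : ∀ t ≥ (0:ℝ), HasDerivAt I (β * I t * S t - δ * I t) t)
    (hS : ∀ t ≥ (0:ℝ), HasDerivAt S (-(β * I t * S t) - v t * S t - μ * S t + μ) t) :
    (∀ t ≥ (0:ℝ), S t ≥ δ / β → -(β * I t * S t) - v t * S t - μ * S t + μ < 0) ∧
    (∃ T ≥ (0:ℝ), ∀ t ≥ T, S t < δ / β ∧ β * I t * S t - δ * I t < 0) ∧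
    Tendsto I atTop (𝓝 0) := by
  have key : ∀ t ≥ (0:ℝ), δ / β ≤ S t → μ ≤ μ * S t + v t * S t := by
    intro t ht hSt
    obtain ⟨hI0, hS0, -⟩ := hD t ht
    rw [div_le_iff₀ hβ] at hSt
    have hnn : (0:ℝ) ≤ μ + vnat := by linarith
    have h2 : (μ + vnat) * δ ≤ (μ + vnat) * (S t * β) :=
      mul_le_mul_of_nonneg_left hSt hnn
    have h3 : μ ≤ (μ + vnat) * S t := by
      have h4 : β * μ ≤ β * ((μ + vnat) * S t) := by nlinarith
      exact le_of_mul_le_mul_left h4 hβ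
    have h4 : vnat * S t ≤ v t * S t :=
      mul_le_mul_of_nonneg_right (hvge t) hS0.le
    nlinarith
  have part1 : ∀ t ≥ (0:ℝ), S t ≥ δ / β →
      -(β * I t * S t) - v t * S t - μ * S t + μ < 0 := by
    intro t ht hSt
    obtain ⟨hI0, hS0, -⟩ := hD t ht
    have hk := key t ht hSt
    have hp : 0 < β * I t * S t := mul_pos (mul_pos hβ hI0) hS0
    linarith
  refine ⟨part1, ?_⟩
  have hentry : ∃ T ≥ (0:ℝ), S T < δ / β := by
    by_contra hno
    push_neg at hno
    have hmono : MonotoneOn I (Set.Ici (0:ℝ)) := by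
      apply monotoneOn_of_deriv_nonneg (convex_Ici 0)
      · exact fun x hx => (hI x hx).continuousAt.continuousWithinAt
      · intro x hx
        rw [interior_Ici] at hx
        exact (hI x hx.le).differentiableAt.differentiableWithinAt
      · intro x hx
        rw [interior_Ici] at hx
        rw [(hI x hx.le).deriv]
        obtain ⟨hI0, hS0, -⟩ := hD x hx.le
        have hSx := hno x hx.le
        rw [div_le_iff₀ hβ] at hSx
        nlinarith [mul_nonneg hI0.le (show (0:ℝ) ≤ S x * β - δ by linarith)]
    have hIge : ∀ t ≥ (0:ℝ), I 0 ≤ I t := fun t ht =>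
      hmono Set.self_mem_Ici ht ht
    have hI00 : 0 < I 0 := (hD 0 le_rfl).1
    have hcpos : 0 < δ * I 0 := mul_pos hδ hI00
    refine SIR_escape S (fun t => -(β * I t * S t) - v t * S t - μ * S t + μ)
      0 (δ * I 0) hcpos hS (fun t ht => (hD t ht).2.1) ?_
    intro t ht
    obtain ⟨hI0, hS0, -⟩ := hD t ht
    have hk := key t ht (hno t ht)
    have hSx := hno t ht
    rw [div_le_iff₀ hβ] at hSx
    have h1 : δ * I 0 ≤ β * I t * S t := by
      have e1 : (S t * β) * I 0 ≤ (S t * β) * I t :=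
        mul_le_mul_of_nonneg_left (hIge t ht) (mul_pos hS0 hβ).le
      have e2 : δ * I 0 ≤ (S t * β) * I 0 :=
        mul_le_mul_of_nonneg_right hSx hI00.le
      nlinarith
    show -(β * I t * S t) - v t * S t - μ * S t + μ ≤ -(δ * I 0)
    linarith
  obtain ⟨T, hT0, hST⟩ := hentry
  have hbar : ∀ t ≥ T, S t < δ / β := by
    apply SIR_barrier S (fun t => -(β * I t * S t) - v t * S t - μ * S t + μ) T (δ / β)
    · exact fun t ht => hS t (le_trans hT0 ht)
    · exact fun t ht hSt => part1 t (le_trans hT0 ht) hSt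
    · exact hST
  have hI'neg : ∀ t ≥ T, β * I t * S t - δ * I t < 0 := by
    intro t ht
    obtain ⟨hI0, hS0, -⟩ := hD t (le_trans hT0 ht)
    have hSx := hbar t ht
    rw [lt_div_iff₀ hβ] at hSx
    nlinarith [mul_pos hI0 (show (0:ℝ) < δ - S t * β by linarith)]
  refine ⟨⟨T, hT0, fun t ht => ⟨hbar t ht, hI'neg t ht⟩⟩, ?_⟩
  have hanti : AntitoneOn I (Set.Ici T) := by
    apply antitoneOn_of_deriv_nonpos (convex_Ici T)
    · exact fun x hx => (hI x (le_trans hT0 hx)).continuousAt.continuousWithinAt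
    · intro x hx
      rw [interior_Ici] at hx
      exact (hI x (le_trans hT0 hx.le)).differentiableAt.differentiableWithinAt
    · intro x hx
      rw [interior_Ici] at hx
      rw [(hI x (le_trans hT0 hx.le)).deriv]
      exact (hI'neg x hx.le).le
  rw [NormedAddCommGroup.tendsto_nhds_zero]
  intro ε hε
  have hexists : ∃ t ≥ T, I t < ε := by
    by_contra hno
    push_neg at hno
    have hβε : 0 < β * ε := mul_pos hβ hε
    have hApos : 0 < μ + vnat + β * ε := by linarith
    set S1 : ℝ := (μ / (μ + vnat + β * ε) + δ / β) / 2 with hS1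
    have hfrac : μ / (μ + vnat + β * ε) < δ / β := by
      rw [div_lt_div_iff₀ hApos hβ]
      nlinarith [mul_pos (mul_pos hδ hβ) hε]
    have hS1lt : S1 < δ / β := by rw [hS1]; linarith
    have hS1gt : μ / (μ + vnat + β * ε) < S1 := by rw [hS1]; linarith
    have hcpos : 0 < (μ + vnat + β * ε) * S1 - μ := by
      have h := mul_lt_mul_of_pos_left hS1gt hApos
      rw [mul_div_cancel₀ _ hApos.ne'] at h
      linarith
    have hSd : ∀ t ≥ T, S1 ≤ S t →
        -(β * I t * S t) - v t * S t - μ * S t + μ ≤ μ - (μ + vnat + β * ε) * S1 := by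
      intro t ht hge
      obtain ⟨hI0, hS0, -⟩ := hD t (le_trans hT0 ht)
      have h1 : β * ε * S t ≤ β * I t * S t := by
        have := mul_le_mul_of_nonneg_right
          (mul_le_mul_of_nonneg_left (hno t ht) hβ.le) hS0.le
        linarith
      have h2 : vnat * S t ≤ v t * S t :=
        mul_le_mul_of_nonneg_right (hvge t) hS0.le
      have h3 : (μ + vnat + β * ε) * S1 ≤ (μ + vnat + β * ε) * S t :=
        mul_le_mul_of_nonneg_left hge hApos.le
      nlinarith
    have hS1entry : ∃ t ≥ T, S t < S1 := by
      by_contra hno2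
      push_neg at hno2
      exact absurd (SIR_escape S
        (fun t => -(β * I t * S t) - v t * S t - μ * S t + μ)
        T ((μ + vnat + β * ε) * S1 - μ) hcpos
        (fun t ht => hS t (le_trans hT0 ht))
        (fun t ht => (hD t (le_trans hT0 ht)).2.1)
        (fun t ht => by
          have h := hSd t ht (hno2 t ht)
          show -(β * I t * S t) - v t * S t - μ * S t + μ ≤
            -((μ + vnat + β * ε) * S1 - μ)
          linarith)) id
    obtain ⟨T1, hT1T, hST1⟩ := hS1entry
    have hstay : ∀ t ≥ T1, S t < S1 := by
      apply SIR_barrier S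
        (fun t => -(β * I t * S t) - v t * S t - μ * S t + μ) T1 S1
      · exact fun t ht => hS t (le_trans hT0 (le_trans hT1T ht))
      · intro t ht hge
        have := hSd t (le_trans hT1T ht) hge
        linarith
      · exact hST1
    have hβS1 : β * S1 < δ := by
      have h := (lt_div_iff₀ hβ).mp hS1lt
      linarith [mul_comm S1 β]
    have hc2pos : 0 < ε * (δ - β * S1) := mul_pos hε (by linarith)
    refine SIR_escape I (fun t => β * I t * S t - δ * I t) T1 (ε * (δ - β * S1))
      hc2pos (fun t ht => hI t (le_trans hT0 (le_trans hT1T ht)))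
      (fun t ht => (hD t (le_trans hT0 (le_trans hT1T ht))).1) ?_
    intro t ht
    have htT : T ≤ t := le_trans hT1T ht
    obtain ⟨hI0, hS0, -⟩ := hD t (le_trans hT0 htT)
    have hεI := hno t htT
    have hSlt := hstay t ht
    have hβS : β * S t ≤ δ := by
      have h := (le_div_iff₀ hβ).mp (hbar t htT).le
      linarith [mul_comm (S t) β]
    have p1 : 0 ≤ (I t - ε) * (δ - β * S t) :=
      mul_nonneg (by linarith) (by linarith)
    have p2 : ε * (β * S t) ≤ ε * (β * S1) :=
      mul_le_mul_of_nonneg_left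
        (mul_le_mul_of_nonneg_left hSlt.le hβ.le) hε.le
    show β * I t * S t - δ * I t ≤ -(ε * (δ - β * S1))
    nlinarith
  obtain ⟨t1, ht1T, ht1ε⟩ := hexists
  filter_upwards [eventually_ge_atTop t1] with t ht
  have htT : T ≤ t := le_trans ht1T ht
  have hIt : 0 < I t := (hD t (le_trans hT0 htT)).1
  have hle : I t ≤ I t1 := hanti ht1T htT ht
  rw [Real.norm_eq_abs, abs_of_pos hIt]
  linarith
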